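/- Let ℓ ∈ M, K = M ∖ {ℓ}, and fix μ ∈ ℝ^K; let ϱ = (c_K(μ))_ℓ be the ℓ-th coordinate of the foot of the Q-perpendicular from the origin to h(μ), and for r ∈ ℝ let τ(r) ∈ ℝ^M be the vector agreeing with μ on K and with τ(r)_ℓ = r. Then for every r ∈ ℝ one has the quadratic relation γ_M(τ(r)) = γ_K(μ) + (r − ϱ)² / ((Q^{(K^c)})⁻¹)_{ℓℓ}, where ((Q^{(K^c)})⁻¹)_{ℓℓ} denotes the (ℓ,ℓ) entry of the inverse of the principal submatrix Q^{(K^c)}; moreover c_M(τ(ϱ)) = c_K(μ). -/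

import Mathlib

open Matrix

lemma aux_dot {ι : Type*} [Fintype ι] (S : Finset ι) (d w : ι → ℝ)
    (hd : ∀ j ∉ S, d j = 0) : d ⬝ᵥ w = ∑ j : ↥S, d ↑j * w ↑j := by
  rw [Finset.sum_coe_sort S (fun j => d j * w j), dotProduct]
  exact (Finset.sum_subset (Finset.subset_univ S)
    (fun x _ hx => by rw [hd x hx, zero_mul])).symm

lemma aux_mulVec {ι : Type*} [Fintype ι] (Q : Matrix ι ι ℝ) (S : Finset ι) (d : ι → ℝ)
    (hd : ∀ j ∉ S, d j = 0) (i : ↥S) :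
    ((Q.submatrix ((↑) : ↥S → ι) (↑)) *ᵥ fun j : ↥S => d ↑j) i = (Q *ᵥ d) ↑i := by
  simp only [mulVec, dotProduct, submatrix_apply]
  rw [Finset.sum_coe_sort S (fun j => Q ↑i j * d j)]
  exact Finset.sum_subset (Finset.subset_univ S) (fun x _ hx => by rw [hd x hx, mul_zero])

lemma aux_posdef {ι : Type*} [Fintype ι] [DecidableEq ι] {Q : Matrix ι ι ℝ} (hQ : Q.PosDef)
    (S : Finset ι) : (Q.submatrix ((↑) : ↥S → ι) (↑)).PosDef := by
  classical
  refine PosDef.of_dotProduct_mulVec_pos (hQ.1.submatrix _) fun x hx => ?_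
  set y : ι → ℝ := fun i => if h : i ∈ S then x ⟨i, h⟩ else 0 with hy
  have hyS : ∀ j ∉ S, y j = 0 := fun j hj => dif_neg hj
  have hyx : ∀ j : ↥S, y ↑j = x j := fun j => by simp [hy]
  have hxy : (fun j : ↥S => y ↑j) = x := funext hyx
  have hy0 : y ≠ 0 := by
    intro h
    apply hx
    funext j
    have := congrFun h ↑j
    rwa [hyx j] at this
  have hpos := hQ.dotProduct_mulVec_pos hy0
  rw [star_trivial] at hpos ⊢
  have key : x ⬝ᵥ (Q.submatrix ((↑) : ↥S → ι) (↑)) *ᵥ x = y ⬝ᵥ (Q *ᵥ y) := by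
    rw [aux_dot S y _ hyS, ← hxy, dotProduct]
    exact Finset.sum_congr rfl fun j _ => by rw [aux_mulVec Q S y hyS j]
  rw [key]; exact hpos

/-- with K = M ∖ {ℓ}, μ ∈ ℝ^K, ϱ = (c_K(μ))_ℓ, and τ(r) agreeing with
μ on K and equal to r at ℓ, one has for every r:
γ_M(τ(r)) = γ_K(μ) + (r − ϱ)² / ((Q^{(K^c)})⁻¹)_{ℓℓ}, and c_M(τ(ϱ)) = c_K(μ).
Here c r denotes c_M(τ(r)), so γ_M(τ(r)) = v(c r), and γ_K(μ) = v(cK). -/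
theorem markowitz_quadratic_relation_along_ray {n : ℕ} (hn : 0 < n)
    (Q : Matrix (Fin n) (Fin n) ℝ) (hQ : Q.PosDef)
    (M : Finset (Fin n)) (hM : M ≠ Finset.univ)
    (ℓ : Fin n) (hℓ : ℓ ∈ M)
    (μ : Fin n → ℝ)
    (cK : Fin n → ℝ)
    (hcK1 : ∀ j ∈ M.erase ℓ, cK j = μ j)
    (hcK2 : ∀ i ∉ M.erase ℓ, Q.mulVec cK i = 0)
    (c : ℝ → (Fin n → ℝ))
    (hc1 : ∀ r : ℝ, ∀ j ∈ M, c r j = Function.update μ ℓ r j)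
    (hc2 : ∀ r : ℝ, ∀ i ∉ M, Q.mulVec (c r) i = 0) :
    (∀ r : ℝ, (c r) ⬝ᵥ Q.mulVec (c r) =
        cK ⬝ᵥ Q.mulVec cK + (r - cK ℓ) ^ 2 /
          ((Q.submatrix ((↑) : ↥((M.erase ℓ)ᶜ) → Fin n) ((↑) : ↥((M.erase ℓ)ᶜ) → Fin n))⁻¹
            ⟨ℓ, by simp⟩ ⟨ℓ, by simp⟩)) ∧
    c (cK ℓ) = cK := by
  classical
  set K : Finset (Fin n) := M.erase ℓ with hKdef
  have hℓK : ℓ ∈ Kᶜ := by simp [hKdef]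
  set A : Matrix ↥(Kᶜ) ↥(Kᶜ) ℝ :=
    Q.submatrix ((↑) : ↥(Kᶜ) → Fin n) ((↑) : ↥(Kᶜ) → Fin n) with hAdef
  have hA_pd : A.PosDef := aux_posdef hQ Kᶜ
  have hA_det : IsUnit A.det := hA_pd.det_pos.ne'.isUnit
  have hAinv_pd : (A⁻¹).PosDef := hA_pd.inv
  set ℓ' : ↥(Kᶜ) := ⟨ℓ, hℓK⟩ with hℓ'def
  set β : ℝ := A⁻¹ ℓ' ℓ' with hβdef
  have hβpos : 0 < β := by
    have h0 : (Pi.single ℓ' 1 : ↥(Kᶜ) → ℝ) ≠ 0 := by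
      intro h
      simpa using congrFun h ℓ'
    have h1 := hAinv_pd.dotProduct_mulVec_pos h0
    rw [star_trivial] at h1
    simpa [hβdef] using h1
  have hβ0 : β ≠ 0 := ne_of_gt hβpos
  have hQt : Qᵀ = Q := hQ.1
  -- main per-r analysis
  have main : ∀ r : ℝ, ∃ s : ℝ,
      (∀ j ∈ K, c r j = cK j) ∧
      (∀ i : ↥(Kᶜ), c r ↑i - cK ↑i = A⁻¹ i ℓ' * s) ∧
      r - cK ℓ = β * s ∧
      c r ⬝ᵥ Q *ᵥ c r = cK ⬝ᵥ Q *ᵥ cK + (r - cK ℓ) * s := by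
    intro r
    set d : Fin n → ℝ := fun i => c r i - cK i with hddef
    have hdK : ∀ j ∈ K, d j = 0 := by
      intro j hj
      have hjM : j ∈ M := Finset.mem_of_mem_erase hj
      have hjne : j ≠ ℓ := Finset.ne_of_mem_erase hj
      simp [hddef, hc1 r j hjM, hcK1 j hj, Function.update_of_ne hjne]
    have hdKc : ∀ j ∉ Kᶜ, d j = 0 := fun j hj => hdK j (by simpa using hj)
    have hdl : d ℓ = r - cK ℓ := by
      simp [hddef, hc1 r ℓ hℓ]
    have hQd : Q *ᵥ d = Q *ᵥ (c r) - Q *ᵥ cK := by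
      rw [← mulVec_sub]
      congr 1
    have hQd0 : ∀ i ∉ M, (Q *ᵥ d) i = 0 := by
      intro i hi
      have hiK : i ∉ K := fun h => hi (Finset.mem_of_mem_erase h)
      rw [hQd]
      simp [hc2 r i hi, hcK2 i hiK]
    set s : ℝ := (Q *ᵥ d) ℓ with hsdef
    have hAu : (A *ᵥ fun i : ↥(Kᶜ) => d ↑i) = Pi.single ℓ' s := by
      funext i
      rw [aux_mulVec Q Kᶜ d hdKc i]
      by_cases h : i = ℓ'
      · subst h
        simp [hsdef]
        rfl
      · have hiℓ : (↑i : Fin n) ≠ ℓ := fun hh => h (Subtype.ext hh)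
        have hiM : (↑i : Fin n) ∉ M := by
          have h2 := i.2
          simp only [hKdef, Finset.mem_compl, Finset.mem_erase] at h2
          intro hmem
          exact h2 ⟨hiℓ, hmem⟩
        rw [hQd0 _ hiM, Pi.single_eq_of_ne h]
    have hu : ∀ i : ↥(Kᶜ), d ↑i = A⁻¹ i ℓ' * s := by
      intro i
      have h2 : (fun i : ↥(Kᶜ) => d ↑i) = A⁻¹ *ᵥ (A *ᵥ fun i : ↥(Kᶜ) => d ↑i) := by
        rw [mulVec_mulVec, nonsing_inv_mul A hA_det, one_mulVec]
      have := congrFun h2 i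
      rwa [hAu, mulVec_single] at this
    have hrs : r - cK ℓ = β * s := by
      have := hu ℓ'
      rw [hβdef]
      rw [show ((↑ℓ' : Fin n)) = ℓ from rfl] at this
      rw [hdl] at this
      exact this
    have cross : d ⬝ᵥ (Q *ᵥ cK) = 0 := by
      rw [dotProduct]
      apply Finset.sum_eq_zero
      intro i _
      by_cases h : i ∈ K
      · rw [hdK i h, zero_mul]
      · rw [hcK2 i h, mul_zero]
    have cross2 : cK ⬝ᵥ (Q *ᵥ d) = 0 := by
      rw [dotProduct_mulVec, ← mulVec_transpose, hQt, dotProduct_comm]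
      exact cross
    have dQd : d ⬝ᵥ (Q *ᵥ d) = (r - cK ℓ) * s := by
      rw [dotProduct, Finset.sum_eq_single ℓ]
      · rw [hdl]
      · intro i _ hne
        by_cases h : i ∈ M
        · rw [hdK i (Finset.mem_erase.mpr ⟨hne, h⟩), zero_mul]
        · rw [hQd0 i h, mul_zero]
      · intro h
        exact absurd (Finset.mem_univ ℓ) h
    have hcr : c r = cK + d := by
      funext i
      simp [hddef]
    refine ⟨s, fun j hj => by have := hdK j hj; simpa [hddef, sub_eq_zero] using this,
      fun i => hu i, hrs, ?_⟩
    rw [hcr, mulVec_add, dotProduct_add, add_dotProduct, add_dotProduct,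
      cross, cross2, dQd]
    ring
  constructor
  · intro r
    obtain ⟨s, _, _, hrs, hquad⟩ := main r
    rw [hquad, hrs]
    field_simp
  · obtain ⟨s, hK', hu, hrs, _⟩ := main (cK ℓ)
    have hs0 : s = 0 := by
      have h0 : β * s = 0 := by
        rw [← hrs]; ring
      exact (mul_eq_zero.mp h0).resolve_left hβ0
    funext i
    by_cases h : i ∈ Kᶜ
    · have := hu ⟨i, h⟩
      rw [hs0, mul_zero, sub_eq_zero] at this
      exact this
    · exact hK' i (by simpa using h)
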